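/- Let n be a positive integer, s ∈ ℝ^d, and let X_1, …, X_n ⊆ ℝ^d be 1-dense sets. Suppose c_0, c_1, …, c_{n-1} ∈ ℝ^d satisfy c_0 = 0 and c_i ∈ conv(X_i ∩ B(c_{i−1} + s, 1)) for all 1 ≤ i ≤ n−1. Then every point y ∈ conv(X_n ∩ B(c_{n−1} + s, 1)) is s-reached in n steps: there exist p_0, p_1, …, p_n ∈ ℝ^d with p_0 = 0, p_n = y, p_i ∈ X_i for all 1 ≤ i ≤ n−1, and ‖(p_{i+1} − p_i) − s‖ ≤ √2 for all 0 ≤ i ≤ n−1. -/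

import Mathlib

open scoped RealInnerProductSpace

lemma key_lemma {E : Type*} [NormedAddCommGroup E] [InnerProductSpace ℝ E]
    (S : Set E) (m q c : E) (hS : S ⊆ Metric.closedBall m 1)
    (hc : c ∈ convexHull ℝ S) (hq : ‖q - c‖ ≤ 1) :
    ∃ x ∈ S, ‖q - x‖ ≤ Real.sqrt 2 := by
  obtain ⟨x, hxS, hx⟩ : ∃ x ∈ S, (inner ℝ x (m - q) : ℝ) ≤ (inner ℝ c (m - q) : ℝ) := by
    by_contra h2
    push_neg at h2
    have hconv : Convex ℝ {w : E | (inner ℝ c (m - q) : ℝ) < (inner ℝ w (m - q) : ℝ)} := by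
      refine convex_halfSpace_gt ⟨?_, ?_⟩ _
      · intro a b; exact inner_add_left a b _
      · intro r a; exact real_inner_smul_left a _ r
    have hsub : S ⊆ {w : E | (inner ℝ c (m - q) : ℝ) < (inner ℝ w (m - q) : ℝ)} := fun z hz => h2 z hz
    have := convexHull_min hsub hconv hc
    simp only [Set.mem_setOf_eq] at this
    exact lt_irrefl _ this
  refine ⟨x, hxS, ?_⟩
  have h1 : ‖x - m‖ ≤ 1 := by
    have := hS hxS
    rwa [Metric.mem_closedBall, dist_eq_norm] at this
  have h1' : ‖x - m‖ ^ 2 ≤ 1 := by nlinarith [norm_nonneg (x - m)]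
  have h2' : ‖q - c‖ ^ 2 ≤ 1 := by nlinarith [norm_nonneg (q - c)]
  have e1 : ‖q - x‖ ^ 2 = ‖x - m‖ ^ 2 + 2 * (inner ℝ x (m - q) : ℝ) + ‖q‖^2 - ‖m‖^2 := by
    rw [@norm_sub_sq_real, @norm_sub_sq_real, inner_sub_right]
    ring_nf
    rw [real_inner_comm]
    ring
  have e2 : ‖q - c‖ ^ 2 = ‖c - m‖ ^ 2 + 2 * (inner ℝ c (m - q) : ℝ) + ‖q‖^2 - ‖m‖^2 := by
    rw [@norm_sub_sq_real, @norm_sub_sq_real, inner_sub_right]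
    ring_nf
    rw [real_inner_comm]
    ring
  have hsq : ‖q - x‖ ^ 2 ≤ 2 := by nlinarith [sq_nonneg ‖c - m‖]
  have h2 : (0:ℝ) ≤ 2 := by norm_num
  nlinarith [Real.sq_sqrt h2, Real.sqrt_nonneg 2, norm_nonneg (q - x)]

/-- A set `X ⊆ ℝ^d` is 1-dense if every point of `ℝ^d` is at distance `< 1` from `X`. -/
def IsOneDense {d : ℕ} (X : Set (EuclideanSpace ℝ (Fin d))) : Prop :=
  ∀ y : EuclideanSpace ℝ (Fin d), ∃ x ∈ X, ‖y - x‖ < 1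

theorem stmt14 (d n : ℕ) (hn : 0 < n) (s : EuclideanSpace ℝ (Fin d))
    (X : ℕ → Set (EuclideanSpace ℝ (Fin d)))
    (hX : ∀ i, 1 ≤ i → i ≤ n → IsOneDense (X i))
    (c : ℕ → EuclideanSpace ℝ (Fin d)) (hc0 : c 0 = 0)
    (hc : ∀ i, 1 ≤ i → i ≤ n - 1 →
      c i ∈ convexHull ℝ (X i ∩ Metric.closedBall (c (i - 1) + s) 1))
    (y : EuclideanSpace ℝ (Fin d))
    (hy : y ∈ convexHull ℝ (X n ∩ Metric.closedBall (c (n - 1) + s) 1)) :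
    ∃ p : ℕ → EuclideanSpace ℝ (Fin d),
      p 0 = 0 ∧ p n = y ∧
      (∀ i, 1 ≤ i → i ≤ n - 1 → p i ∈ X i) ∧
      (∀ i, i ≤ n - 1 → ‖(p (i + 1) - p i) - s‖ ≤ Real.sqrt 2) := by
  have sqrt2_ge_one : (1 : ℝ) ≤ Real.sqrt 2 := by
    nlinarith [Real.sq_sqrt (by norm_num : (0:ℝ) ≤ 2), Real.sqrt_nonneg 2]
  have hyball : y ∈ Metric.closedBall (c (n - 1) + s) 1 :=
    convexHull_min Set.inter_subset_right (convex_closedBall _ _) hy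
  have aux : ∀ j : ℕ, j ≤ n - 1 → ∃ p : ℕ → EuclideanSpace ℝ (Fin d), p n = y ∧
      (∀ i, n - j ≤ i → i ≤ n - 1 → p i ∈ X i) ∧
      (∀ i, n - j ≤ i → i ≤ n - 1 → ‖(p (i + 1) - p i) - s‖ ≤ Real.sqrt 2) ∧
      p (n - j) ∈ Metric.closedBall (c (n - j - 1) + s) 1 := by
    intro j
    induction j with
    | zero =>
      intro _
      refine ⟨fun _ => y, rfl, ?_, ?_, ?_⟩
      · intro i h1 h2; omega
      · intro i h1 h2; omega
      · simpa using hyball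
    | succ j ih =>
      intro hj1
      obtain ⟨p, hpn, hpX, hpnorm, hpball⟩ := ih (by omega)
      set i0 := n - (j + 1) with hi0def
      have hi0a : 1 ≤ i0 := by omega
      have hi0b : i0 ≤ n - 1 := by omega
      have hnj : n - j = i0 + 1 := by omega
      have hq : ‖(p (i0 + 1) - s) - c i0‖ ≤ 1 := by
        have := hpball
        rw [hnj] at this
        simp only [Nat.add_sub_cancel] at this
        rw [Metric.mem_closedBall, dist_eq_norm] at this
        calc ‖(p (i0 + 1) - s) - c i0‖ = ‖p (i0 + 1) - (c i0 + s)‖ := by abel_nf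
        _ ≤ 1 := this
      obtain ⟨x, hxS, hxn⟩ := key_lemma (X i0 ∩ Metric.closedBall (c (i0 - 1) + s) 1)
        (c (i0 - 1) + s) (p (i0 + 1) - s) (c i0) Set.inter_subset_right
        (hc i0 hi0a hi0b) hq
      refine ⟨Function.update p i0 x, ?_, ?_, ?_, ?_⟩
      · rw [Function.update_of_ne (by omega) _ _]; exact hpn
      · intro i h1 h2
        rcases eq_or_lt_of_le h1 with h | h
        · rw [← h, Function.update_self]; exact hxS.1
        · rw [Function.update_of_ne (by omega) _ _]
          exact hpX i (by omega) h2
      · intro i h1 h2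
        rcases eq_or_lt_of_le h1 with h | h
        · rw [← h, Function.update_of_ne (by omega) _ _, Function.update_self]
          calc ‖(p (i0 + 1) - x) - s‖ = ‖(p (i0 + 1) - s) - x‖ := by abel_nf
          _ ≤ Real.sqrt 2 := hxn
        · rw [Function.update_of_ne (by omega) _ _, Function.update_of_ne (by omega) _ _]
          exact hpnorm i (by omega) h2
      · have h3 : n - (j+1) - 1 = i0 - 1 := by omega
        rw [h3, Function.update_self]
        exact hxS.2
  obtain ⟨p, hpn, hpX, hpnorm, hpball⟩ := aux (n - 1) le_rfl
  have h1 : n - (n - 1) = 1 := by omega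
  rw [h1] at hpX hpnorm hpball
  have h2 : n - (n - 1) - 1 = 0 := by omega
  rw [h1] at h2
  rw [show (1:ℕ) - 1 = 0 from rfl, hc0] at hpball
  refine ⟨Function.update p 0 0, Function.update_self _ _ _, ?_, ?_, ?_⟩
  · rw [Function.update_of_ne (by omega) _ _]; exact hpn
  · intro i hi1 hi2
    rw [Function.update_of_ne (by omega) _ _]
    exact hpX i hi1 hi2
  · intro i hi
    rcases Nat.eq_zero_or_pos i with h | h
    · subst h
      rw [Function.update_self, Function.update_of_ne (by omega) _ _]
      rw [Metric.mem_closedBall, dist_eq_norm, zero_add] at hpball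
      calc ‖(p 1 - 0) - s‖ = ‖p 1 - s‖ := by abel_nf
      _ ≤ 1 := hpball
      _ ≤ Real.sqrt 2 := sqrt2_ge_one
    · rw [Function.update_of_ne (by omega) _ _, Function.update_of_ne (by omega) _ _]
      exact hpnorm i h hi
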